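/- Let G be a group, S a finite subset with 1 ∈ S, and H a finite subgroup of G. Suppose |HS| - |H| ≤ |S| - 1 and H is a proper subgroup of the group generated by S (so that S is not contained in a single right coset of H, i.e., HS meets at least two right cosets of H). Then there exists a ∈ S such that S⁻¹HS = S⁻¹S ∪ a⁻¹Ha. -/

import Mathlib

open Pointwise

private lemma coset_mem {G : Type*} [Group G] {H : Subgroup G} {s x : G} :
    x ∈ (H : Set G) * {s} ↔ x * s⁻¹ ∈ H := by
  rw [Set.mul_singleton]
  constructor
  · rintro ⟨h, hh, rfl⟩; simpa using hh
  · intro hx; exact ⟨x * s⁻¹, hx, by group⟩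

private lemma conj_mem {G : Type*} [Group G] {H : Subgroup G} {a x : G} :
    x ∈ ({a⁻¹} : Set G) * (H : Set G) * {a} ↔ a * x * a⁻¹ ∈ H := by
  constructor
  · intro h
    rw [Set.mem_mul] at h
    obtain ⟨y, hy, c, hc, hxe⟩ := h
    rw [Set.mem_mul] at hy
    obtain ⟨a', ha', g, hg, hye⟩ := hy
    simp only [Set.mem_singleton_iff] at ha' hc
    have : a * x * a⁻¹ = g := by rw [← hxe, ← hye, ha', hc]; group
    rwa [this]
  · intro hmem
    have h2 := Set.mul_mem_mul (Set.mul_mem_mul (Set.mem_singleton a⁻¹) hmem)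
      (Set.mem_singleton a)
    have : a⁻¹ * (a * x * a⁻¹) * a = x := by group
    rwa [this] at h2

/-- Key counting lemma: elements of `S` in distinct right cosets of `H`
have coset intersections summing to more than `|H|`. -/
private lemma keyA {G : Type*} [Group G] {S : Set G} (hS : S.Finite)
    {H : Subgroup G} (hHfin : (H : Set G).Finite)
    (hcard : ((H : Set G) * S).ncard + 1 ≤ (H : Set G).ncard + S.ncard)
    {s t : G} (hs : s ∈ S) (ht : t ∈ S) (hst : t * s⁻¹ ∉ H) :
    (H : Set G).ncard + 1
      ≤ (S ∩ ((H : Set G) * {s})).ncard + (S ∩ ((H : Set G) * {t})).ncard := by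
  set Cs : Set G := (H : Set G) * {s} with hCs
  set Ct : Set G := (H : Set G) * {t} with hCt
  have hCsfin : Cs.Finite := hHfin.mul (Set.finite_singleton s)
  have hCtfin : Ct.Finite := hHfin.mul (Set.finite_singleton t)
  have hHSfin : ((H : Set G) * S).Finite := hHfin.mul hS
  have hdisj : Disjoint Cs Ct := by
    rw [Set.disjoint_left]
    intro x hx1 hx2
    rw [hCs, coset_mem] at hx1
    rw [hCt, coset_mem] at hx2
    apply hst
    have : (x * t⁻¹)⁻¹ * (x * s⁻¹) = t * s⁻¹ := by group
    rw [← this]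
    exact H.mul_mem (H.inv_mem hx2) hx1
  -- |Cs| = |Ct| = |H|
  have hcardCs : Cs.ncard = (H : Set G).ncard := by
    rw [hCs, Set.mul_singleton]
    exact Set.ncard_image_of_injective _ (mul_left_injective s)
  have hcardCt : Ct.ncard = (H : Set G).ncard := by
    rw [hCt, Set.mul_singleton]
    exact Set.ncard_image_of_injective _ (mul_left_injective t)
  -- union sits inside H * S
  have hsub : Cs ∪ Ct ∪ (S \ (Cs ∪ Ct)) ⊆ (H : Set G) * S := by
    intro x hx
    rcases hx with (hx | hx) | hx
    · rw [hCs, coset_mem] at hx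
      have : (x * s⁻¹) * s = x := by group
      rw [← this]; exact Set.mul_mem_mul hx hs
    · rw [hCt, coset_mem] at hx
      have : (x * t⁻¹) * t = x := by group
      rw [← this]; exact Set.mul_mem_mul hx ht
    · have : (1 : G) * x = x := by group
      rw [← this]; exact Set.mul_mem_mul H.one_mem hx.1
  have hd2 : Disjoint (Cs ∪ Ct) (S \ (Cs ∪ Ct)) := disjoint_sdiff_self_right
  have h1 : (Cs ∪ Ct).ncard = Cs.ncard + Ct.ncard :=
    Set.ncard_union_eq hdisj hCsfin hCtfin
  have h2 : (Cs ∪ Ct ∪ (S \ (Cs ∪ Ct))).ncard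
      = (Cs ∪ Ct).ncard + (S \ (Cs ∪ Ct)).ncard :=
    Set.ncard_union_eq hd2 (hCsfin.union hCtfin) hS.diff
  have hle : (Cs ∪ Ct ∪ (S \ (Cs ∪ Ct))).ncard ≤ ((H : Set G) * S).ncard :=
    Set.ncard_le_ncard hsub hHSfin
  have hsplit : (S ∩ (Cs ∪ Ct)).ncard + (S \ (Cs ∪ Ct)).ncard = S.ncard :=
    Set.ncard_inter_add_ncard_diff_eq_ncard S (Cs ∪ Ct) hS
  have hinter : (S ∩ (Cs ∪ Ct)).ncard = (S ∩ Cs).ncard + (S ∩ Ct).ncard := by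
    rw [Set.inter_union_distrib_left]
    exact Set.ncard_union_eq
      (hdisj.mono Set.inter_subset_right Set.inter_subset_right)
      (hS.inter_of_left _) (hS.inter_of_left _)
  show (H : Set G).ncard + 1 ≤ (S ∩ Cs).ncard + (S ∩ Ct).ncard
  omega

/-- Pigeonhole lemma: if the coset intersections are big, `s⁻¹ h t ∈ S⁻¹ S`. -/
private lemma keyB {G : Type*} [Group G] {S : Set G} (hS : S.Finite)
    {H : Subgroup G} (hHfin : (H : Set G).Finite)
    {s t h : G} (hs : s ∈ S) (ht : t ∈ S) (hh : h ∈ H)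
    (hbig : (H : Set G).ncard + 1
      ≤ (S ∩ ((H : Set G) * {s})).ncard + (S ∩ ((H : Set G) * {t})).ncard) :
    s⁻¹ * h * t ∈ S⁻¹ * S := by
  set A : Set G := (fun u => u * (s⁻¹ * h * t)) '' (S ∩ ((H : Set G) * {s})) with hA
  set B : Set G := S ∩ ((H : Set G) * {t}) with hB
  set Ct : Set G := (H : Set G) * {t} with hCt
  have hCtfin : Ct.Finite := hHfin.mul (Set.finite_singleton t)
  have hAfin : A.Finite := by rw [hA]; exact (hS.inter_of_left _).image _
  have hBfin : B.Finite := hS.inter_of_left _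
  have hAsub : A ⊆ Ct := by
    rintro _ ⟨u, ⟨huS, hu⟩, rfl⟩
    rw [coset_mem] at hu
    rw [hCt, coset_mem]
    have : (u * s⁻¹) * h = u * (s⁻¹ * h * t) * t⁻¹ := by group
    rw [← this]
    exact H.mul_mem hu hh
  have hBsub : B ⊆ Ct := Set.inter_subset_right
  have hcardA : A.ncard = (S ∩ ((H : Set G) * {s})).ncard :=
    Set.ncard_image_of_injective _ (mul_left_injective _)
  have hcardCt : Ct.ncard = (H : Set G).ncard := by
    rw [hCt, Set.mul_singleton]
    exact Set.ncard_image_of_injective _ (mul_left_injective t)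
  have hunle : (A ∪ B).ncard ≤ Ct.ncard :=
    Set.ncard_le_ncard (Set.union_subset hAsub hBsub) hCtfin
  have hsum : (A ∪ B).ncard + (A ∩ B).ncard = A.ncard + B.ncard :=
    Set.ncard_union_add_ncard_inter A B hAfin hBfin
  have hne : (A ∩ B).Nonempty := by
    rw [Set.nonempty_iff_ne_empty]
    intro hemp
    rw [hemp, Set.ncard_empty] at hsum
    omega
  obtain ⟨x, hxA, hxB⟩ := hne
  obtain ⟨v, ⟨hvS, -⟩, rfl⟩ := hxA
  have hxS : v * (s⁻¹ * h * t) ∈ S := hxB.1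
  have hveq : s⁻¹ * h * t = v⁻¹ * (v * (s⁻¹ * h * t)) := by group
  rw [hveq]
  exact Set.mul_mem_mul (Set.inv_mem_inv.mpr hvS) hxS

theorem stmt4 {G : Type*} [Group G] (S : Set G) (hS : S.Finite) (h1 : (1 : G) ∈ S)
    (hgen : Subgroup.closure S = ⊤) (H : Subgroup G) (hHfin : (H : Set G).Finite)
    (hprop : H ≠ ⊤)
    (hcard : ((H : Set G) * S).ncard + 1 ≤ (H : Set G).ncard + S.ncard) :
    ∃ a ∈ S, S⁻¹ * (H : Set G) * S = S⁻¹ * S ∪ {a⁻¹} * (H : Set G) * {a} := by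
  -- pick a ∈ S minimizing |S ∩ Ha|
  have hSne : (hS.toFinset).Nonempty := ⟨1, hS.mem_toFinset.mpr h1⟩
  obtain ⟨a, haF, hmin⟩ := hS.toFinset.exists_min_image
    (fun x => (S ∩ ((H : Set G) * {x})).ncard) hSne
  have haS : a ∈ S := hS.mem_toFinset.mp haF
  have hmin' : ∀ b ∈ S, (S ∩ ((H : Set G) * {a})).ncard ≤ (S ∩ ((H : Set G) * {b})).ncard :=
    fun b hb => hmin b (hS.mem_toFinset.mpr hb)
  refine ⟨a, haS, Set.Subset.antisymm ?_ ?_⟩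
  · -- forward inclusion
    intro x hx
    rw [Set.mem_mul] at hx
    obtain ⟨y, hy, t, htS, hxe⟩ := hx
    rw [Set.mem_mul] at hy
    obtain ⟨si, hsi, h, hh, hye⟩ := hy
    rw [Set.mem_inv] at hsi
    set s : G := si⁻¹ with hsdef
    have hsS : s ∈ S := hsi
    have hxval : x = s⁻¹ * h * t := by rw [← hxe, ← hye, hsdef]; group
    by_cases hboth : s * a⁻¹ ∈ H ∧ t * a⁻¹ ∈ H
    · right
      rw [conj_mem, hxval]
      have heq : a * (s⁻¹ * h * t) * a⁻¹ = (s * a⁻¹)⁻¹ * h * (t * a⁻¹) := by group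
      rw [heq]
      exact H.mul_mem (H.mul_mem (H.inv_mem hboth.1) hh) hboth.2
    · left
      rw [hxval]
      refine keyB hS hHfin hsS htS hh ?_
      by_cases hst : t * s⁻¹ ∈ H
      · -- s, t in same coset, not the a-coset
        have hsa : s * a⁻¹ ∉ H := by
          intro hsa
          apply hboth
          refine ⟨hsa, ?_⟩
          have : (t * s⁻¹) * (s * a⁻¹) = t * a⁻¹ := by group
          rw [← this]
          exact H.mul_mem hst hsa
        have has : a * s⁻¹ ∉ H := by
          intro has
          apply hsa
          have : (a * s⁻¹)⁻¹ = s * a⁻¹ := by group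
          rw [← this]
          exact H.inv_mem has
        have hkey := keyA hS hHfin hcard hsS haS has
        have hmono := hmin' t htS
        omega
      · exact keyA hS hHfin hcard hsS htS hst
  · -- reverse inclusion
    intro x hx
    rcases hx with hx | hx
    · rw [Set.mem_mul] at hx
      obtain ⟨u, hu, v, hv, rfl⟩ := hx
      have : u * v = (u * 1) * v := by group
      rw [this]
      exact Set.mul_mem_mul (Set.mul_mem_mul hu H.one_mem) hv
    · rw [conj_mem] at hx
      have heq : x = a⁻¹ * (a * x * a⁻¹) * a := by group
      rw [heq]
      exact Set.mul_mem_mul (Set.mul_mem_mul (Set.inv_mem_inv.mpr haS) hx) haS
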